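/- If a voting system C on a set A of at least three alternatives satisfies unanimity and independence of irrelevant alternatives, then C satisfies monotonicity: given profiles P, P' with {i : a ≽_i b} ⊆ {i : a ≽'_i b} and {i : b ≽_i a} ⊇ {i : b ≽'_i a}, if a ≽ b in C(P) then a ≽' b in C(P'). -/
import Mathlib


variable {A I : Type*}

set_option maxHeartbeats 1600000

/-- A partial preorder: a reflexive and transitive binary relation. -/
def IsPPO (P : A → A → Prop) : Prop := Reflexive P ∧ Transitive P

/-- A linear (total) preorder: reflexive, transitive and complete. -/
def IsLPO (P : A → A → Prop) : Prop := Reflexive P ∧ Transitive P ∧ ∀ a b, P a b ∨ P b a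

/-- A profile of partial preorders. -/
def IsPPOProfile (P : I → A → A → Prop) : Prop := ∀ i, IsPPO (P i)

/-- A profile of linear (total) preorders. -/
def IsLPOProfile (P : I → A → A → Prop) : Prop := ∀ i, IsLPO (P i)

/-- Strict preference. -/
def StrictPref (P : A → A → Prop) (a b : A) : Prop := P a b ∧ ¬ P b a

/-- Indifference. -/
def Indiff (P : A → A → Prop) (a b : A) : Prop := P a b ∧ P b a

/-- The set `A` contains at least three distinct alternatives. -/
def ThreeAlts (A : Type*) : Prop := ∃ a b c : A, a ≠ b ∧ b ≠ c ∧ a ≠ c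

/-- Unanimity. -/
def Unanimity (C : (I → A → A → Prop) → A → A → Prop) : Prop :=
  ∀ P, IsPPOProfile P → ∀ a b : A, (∀ i, P i a b) → C P a b

/-- Independence of irrelevant alternatives. -/
def IIA (C : (I → A → A → Prop) → A → A → Prop) : Prop :=
  ∀ P P' : I → A → A → Prop, IsPPOProfile P → IsPPOProfile P' → ∀ a b : A,
    {i | P i a b} = {i | P' i a b} → {i | P i b a} = {i | P' i b a} →
    (C P a b ↔ C P' a b)

/-- Neutrality: `C (ρ*P) = ρ*(C P)` for every permutation `ρ` of the alternatives. -/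
def Neutrality (C : (I → A → A → Prop) → A → A → Prop) : Prop :=
  ∀ (ρ : Equiv.Perm A) (P : I → A → A → Prop), IsPPOProfile P →
    ∀ x y : A, C (fun i a b => P i (ρ.symm a) (ρ.symm b)) x y ↔ C P (ρ.symm x) (ρ.symm y)

/-- Monotonicity. -/
def Monotonicity (C : (I → A → A → Prop) → A → A → Prop) : Prop :=
  ∀ P P' : I → A → A → Prop, IsPPOProfile P → IsPPOProfile P' → ∀ a b : A,
    {i | P i a b} ⊆ {i | P' i a b} → {i | P' i b a} ⊆ {i | P i b a} →
    C P a b → C P' a b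

/-- `J` is a decisive set: unanimous strict preference on `J` forces weak aggregate preference. -/
def Decisive (C : (I → A → A → Prop) → A → A → Prop) (J : Set I) : Prop :=
  ∀ P, IsPPOProfile P → ∀ a b : A, (∀ j ∈ J, StrictPref (P j) a b) → C P a b

/-- `J` is a strongly decisive set: unanimous weak preference on `J` forces weak aggregate preference. -/
def SDecisive (C : (I → A → A → Prop) → A → A → Prop) (J : Set I) : Prop :=
  ∀ P, IsPPOProfile P → ∀ a b : A, (∀ j ∈ J, P j a b) → C P a b

/-- Auxiliary profile: `b` and `c` unanimously indifferent, `a` vs `b` and `a` vs `c`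
both configured as `a` vs `b` in `P`. -/
def Mprof (P : I → A → A → Prop) (a b c : A) : I → A → A → Prop :=
  fun i x y => x = y ∨ (x = b ∧ y = c) ∨ (x = c ∧ y = b) ∨
    (x = a ∧ (y = b ∨ y = c) ∧ P i a b) ∨ ((x = b ∨ x = c) ∧ y = a ∧ P i b a)

/-- Auxiliary profile: `a` vs `c` configured as `a` vs `b` in `P`, `c` unanimously above `b`,
`a` vs `b` configured as in `P'`. -/
def Rprof (P P' : I → A → A → Prop) (a b c : A) : I → A → A → Prop :=
  fun i x y => x = y ∨ (x = a ∧ y = c ∧ P i a b) ∨ (x = c ∧ y = a ∧ P i b a) ∨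
    (x = c ∧ y = b) ∨ (x = b ∧ y = c ∧ P' i b a ∧ P i a b) ∨
    (x = a ∧ y = b ∧ P' i a b) ∨ (x = b ∧ y = a ∧ P' i b a)

lemma thirdAlt (hA : ThreeAlts A) (a b : A) : ∃ c : A, c ≠ a ∧ c ≠ b := by
  obtain ⟨x, y, z, hxy, hyz, hxz⟩ := hA
  by_cases hxa : x = a
  · subst hxa
    by_cases hyb : y = b
    · subst hyb
      exact ⟨z, fun h => hxz h.symm, fun h => hyz h.symm⟩
    · exact ⟨y, fun h => hxy h.symm, hyb⟩
  · by_cases hxb : x = b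
    · subst hxb
      by_cases hya : y = a
      · subst hya
        exact ⟨z, fun h => hyz h.symm, fun h => hxz h.symm⟩
      · exact ⟨y, hya, fun h => hxy h.symm⟩
    · exact ⟨x, hxa, hxb⟩

lemma Mprof_ppo (P : I → A → A → Prop) (a b c : A) :
    IsPPOProfile (Mprof P a b c) := by
  intro i
  constructor
  · intro x; exact Or.inl rfl
  · intro x y z hxy hyz
    unfold Mprof at *
    rcases hxy with h | ⟨h1, h2⟩ | ⟨h1, h2⟩ | ⟨h1, h2 | h2, h3⟩ | ⟨h1 | h1, h2, h3⟩ <;>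
    rcases hyz with g | ⟨g1, g2⟩ | ⟨g1, g2⟩ | ⟨g1, g2 | g2, g3⟩ | ⟨g1 | g1, g2, g3⟩ <;>
      subst_vars <;> tauto

lemma Rprof_ppo (P P' : I → A → A → Prop) (a b c : A)
    (hS : ∀ i, P i a b → P' i a b) (hT : ∀ i, P' i b a → P i b a) :
    IsPPOProfile (Rprof P P' a b c) := by
  intro i
  have h1 := hS i
  have h2 := hT i
  constructor
  · intro x; exact Or.inl rfl
  · intro x y z hxy hyz
    unfold Rprof at *
    rcases hxy with h | ⟨e1, e2, e3⟩ | ⟨e1, e2, e3⟩ | ⟨e1, e2⟩ | ⟨e1, e2, e3, e4⟩ |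
      ⟨e1, e2, e3⟩ | ⟨e1, e2, e3⟩ <;>
    rcases hyz with g | ⟨f1, f2, f3⟩ | ⟨f1, f2, f3⟩ | ⟨f1, f2⟩ | ⟨f1, f2, f3, f4⟩ |
      ⟨f1, f2, f3⟩ | ⟨f1, f2, f3⟩ <;>
      subst_vars <;> tauto

theorem arrovian_monotonicity (C : (I → A → A → Prop) → A → A → Prop)
    (hA : ThreeAlts A)
    (hC : ∀ P, IsPPOProfile P → IsPPO (C P))
    (hU : Unanimity C) (hIIA : IIA C) :
    Monotonicity C := by
  intro P P' hP hP' a b hSsub hTsub hab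
  by_cases hab' : a = b
  · subst hab'
    exact (hC P' hP').1 a
  obtain ⟨c, hca, hcb⟩ := thirdAlt hA a b
  have hS : ∀ i, P i a b → P' i a b := fun i h => hSsub h
  have hT : ∀ i, P' i b a → P i b a := fun i h => hTsub h
  have hM : IsPPOProfile (Mprof P a b c) := Mprof_ppo P a b c
  have hR : IsPPOProfile (Rprof P P' a b c) := Rprof_ppo P P' a b c hS hT
  have hac : a ≠ c := fun h => hca h.symm
  have hbc : b ≠ c := fun h => hcb h.symm
  -- step 1 : transfer C P a b to the M profile
  have s1 : C (Mprof P a b c) a b := by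
    refine (hIIA P (Mprof P a b c) hP hM a b ?_ ?_).mp hab
    · ext i; simp only [Set.mem_setOf_eq, Mprof]; tauto
    · ext i; simp only [Set.mem_setOf_eq, Mprof]; tauto
  have s2 : C (Mprof P a b c) b c :=
    hU (Mprof P a b c) hM b c (fun i => Or.inr (Or.inl ⟨rfl, rfl⟩))
  have s3 : C (Mprof P a b c) a c := (hC _ hM).2 s1 s2
  -- step 2 : transfer to the R profile at the pair (a, c)
  have s4 : C (Rprof P P' a b c) a c := by
    refine (hIIA (Mprof P a b c) (Rprof P P' a b c) hM hR a c ?_ ?_).mp s3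
    · ext i; simp only [Set.mem_setOf_eq, Mprof, Rprof]; tauto
    · ext i; simp only [Set.mem_setOf_eq, Mprof, Rprof]; tauto
  have s5 : C (Rprof P P' a b c) c b :=
    hU (Rprof P P' a b c) hR c b
      (fun i => Or.inr (Or.inr (Or.inr (Or.inl ⟨rfl, rfl⟩))))
  have s6 : C (Rprof P P' a b c) a b := (hC _ hR).2 s4 s5
  -- step 3 : transfer to P'
  refine (hIIA (Rprof P P' a b c) P' hR hP' a b ?_ ?_).mp s6
  · ext i; simp only [Set.mem_setOf_eq, Rprof]; tauto
  · ext i; simp only [Set.mem_setOf_eq, Rprof]; tauto
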